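/- (Termination of the inner sampling loop of Algorithm 2.) Let L_g > 0 and suppose each gradient ∇f_i is L_g-Lipschitz continuous on ℝⁿ, for each i ∈ N there exists x_i* ∈ ℝⁿ with ∇f_i(x_i*) = 0, and x ∈ ℝⁿ, D_0 ≥ 0 satisfy max_{i ∈ N} ‖x − x_i*‖ ≤ D_0 and ‖∇²f_i(x)‖ ≤ L_g for all i ∈ N. Let ε_g, ε_H > 0, γ > 1, 0 < Δ ≤ Δ_max, and let j ∈ ℕ satisfy ε_g γ^j > 10 L_g D_0 and ε_H γ^j > 10 L_g. Set h_g := γ^{−j}(Δ/Δ_max)² and h_H := Δ/(γ^j Δ_max). Then: (a) if ‖∇f(x)‖ > ε_g, then every nonempty G ⊆ N with |G| ≥ ⌈(1−h_g)·d⌉ satisfies ‖∇f_G(x)‖ > 4ε_g/5; and (b) if −λ_min(∇²f(x)) > ε_H, then every nonempty H ⊆ N with |H| ≥ ⌈(1−h_H)·d⌉ satisfies −λ_min(∇²f_H(x)) > 4ε_H/5. -/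

import Mathlib

open scoped RealInnerProductSpace

/-- The spectral (ℓ²-operator) norm of a real matrix. -/
noncomputable def specNorm {n : ℕ} (A : Matrix (Fin n) (Fin n) ℝ) : ℝ :=
  ‖Matrix.toEuclideanCLM (𝕜 := ℝ) A‖

/-- The smallest eigenvalue of a (Hermitian) real matrix. -/
noncomputable def lambdaMin {n : ℕ} (A : Matrix (Fin n) (Fin n) ℝ) : ℝ :=
  if h : A.IsHermitian then ⨅ i, h.eigenvalues i else 0

/-- The Hessian matrix of `f` at `x`, given by second directional derivatives. -/
noncomputable def hessian {n : ℕ} (f : EuclideanSpace ℝ (Fin n) → ℝ)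
    (x : EuclideanSpace ℝ (Fin n)) : Matrix (Fin n) (Fin n) ℝ :=
  fun i j => iteratedFDeriv ℝ 2 f x ![EuclideanSpace.single i 1, EuclideanSpace.single j 1]

/- ### Auxiliary lemmas -/

lemma lambdaMin_le_rayleigh {n : ℕ} [NeZero n] {A : Matrix (Fin n) (Fin n) ℝ}
    (hA : A.IsHermitian) (v : EuclideanSpace ℝ (Fin n)) (hv : ‖v‖ = 1) :
    lambdaMin A ≤ ⟪v, Matrix.toEuclideanCLM (𝕜 := ℝ) A v⟫ := by
  set T := Matrix.toEuclideanCLM (𝕜 := ℝ) A with hT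
  set b := hA.eigenvectorBasis with hb
  have hsym : ∀ y w : EuclideanSpace ℝ (Fin n), ⟪T y, w⟫ = ⟪y, T w⟫ :=
    Matrix.isHermitian_iff_isSymmetric.mp hA
  have hTb : ∀ i, T (b i) = hA.eigenvalues i • b i := by
    intro i; ext k; exact congrFun (hA.mulVec_eigenvectorBasis i) k
  have key : ⟪v, T v⟫ = ∑ i, hA.eigenvalues i * ⟪b i, v⟫ ^ 2 := by
    rw [← b.sum_inner_mul_inner v (T v)]
    refine Finset.sum_congr rfl fun i _ => ?_
    rw [← hsym (b i) v, hTb i, real_inner_smul_left, real_inner_comm (b i) v]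
    ring
  have hnorm : ∑ i, ⟪b i, v⟫ ^ 2 = 1 := by
    have := b.sum_inner_mul_inner v v
    rw [real_inner_self_eq_norm_sq, hv, one_pow] at this
    rw [← this]
    refine Finset.sum_congr rfl fun i _ => ?_
    rw [real_inner_comm (b i) v]; ring
  have hmin : ∀ i, lambdaMin A ≤ hA.eigenvalues i := fun i => by
    rw [lambdaMin, dif_pos hA]
    exact ciInf_le (Finite.bddBelow_range _) i
  calc lambdaMin A = lambdaMin A * ∑ i, ⟪b i, v⟫ ^ 2 := by rw [hnorm, mul_one]
    _ = ∑ i, lambdaMin A * ⟪b i, v⟫ ^ 2 := Finset.mul_sum _ _ _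
    _ ≤ ∑ i, hA.eigenvalues i * ⟪b i, v⟫ ^ 2 :=
        Finset.sum_le_sum fun i _ => mul_le_mul_of_nonneg_right (hmin i) (sq_nonneg _)
    _ = ⟪v, T v⟫ := key.symm

lemma exists_unit_rayleigh {n : ℕ} [NeZero n] {A : Matrix (Fin n) (Fin n) ℝ}
    (hA : A.IsHermitian) :
    ∃ v : EuclideanSpace ℝ (Fin n), ‖v‖ = 1 ∧
      ⟪v, Matrix.toEuclideanCLM (𝕜 := ℝ) A v⟫ = lambdaMin A := by
  obtain ⟨i, hi⟩ := exists_eq_ciInf_of_finite (f := hA.eigenvalues)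
  refine ⟨hA.eigenvectorBasis i, hA.eigenvectorBasis.orthonormal.1 i, ?_⟩
  have hTb : Matrix.toEuclideanCLM (𝕜 := ℝ) A (hA.eigenvectorBasis i)
      = hA.eigenvalues i • hA.eigenvectorBasis i := by
    ext k; exact congrFun (hA.mulVec_eigenvectorBasis i) k
  rw [hTb, real_inner_smul_right, real_inner_self_eq_norm_sq,
    hA.eigenvectorBasis.orthonormal.1 i, lambdaMin, dif_pos hA, ← hi]
  ring

lemma lambdaMin_perturb {n : ℕ} [NeZero n] {A B : Matrix (Fin n) (Fin n) ℝ}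
    (hA : A.IsHermitian) (hB : B.IsHermitian) :
    lambdaMin B ≤ lambdaMin A + specNorm (B - A) := by
  obtain ⟨v, hv1, hv2⟩ := exists_unit_rayleigh hA
  have h1 := lambdaMin_le_rayleigh hB v hv1
  set S := Matrix.toEuclideanCLM (𝕜 := ℝ) (B - A) with hS
  have h2 : ⟪v, Matrix.toEuclideanCLM (𝕜 := ℝ) B v⟫
      = ⟪v, Matrix.toEuclideanCLM (𝕜 := ℝ) A v⟫ + ⟪v, S v⟫ := by
    rw [hS, map_sub]
    simp [inner_sub_right]
  have h3 : ⟪v, S v⟫ ≤ specNorm (B - A) := by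
    calc ⟪v, S v⟫ ≤ ‖v‖ * ‖S v‖ := real_inner_le_norm _ _
      _ ≤ ‖v‖ * (‖S‖ * ‖v‖) :=
          mul_le_mul_of_nonneg_left (S.le_opNorm v) (norm_nonneg v)
      _ = specNorm (B - A) := by rw [hv1]; simp [specNorm, hS]
  linarith

lemma gradient_combo {d n : ℕ} (f : Fin d → EuclideanSpace ℝ (Fin n) → ℝ)
    (hf : ∀ i, ContDiff ℝ 2 (f i)) (c : ℝ) (s : Finset (Fin d)) (x : EuclideanSpace ℝ (Fin n)) :
    gradient (fun y => c * ∑ i ∈ s, f i y) x = c • ∑ i ∈ s, gradient (f i) x := by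
  have hdiff : ∀ i ∈ s, DifferentiableAt ℝ (f i) x := fun i _ =>
    ((hf i).differentiable (by norm_num)).differentiableAt
  unfold gradient
  rw [fderiv_const_mul (DifferentiableAt.fun_sum hdiff) c, fderiv_fun_sum hdiff, map_smul, map_sum]

lemma hessian_combo {d n : ℕ} (f : Fin d → EuclideanSpace ℝ (Fin n) → ℝ)
    (hf : ∀ i, ContDiff ℝ 2 (f i)) (c : ℝ) (s : Finset (Fin d)) (x : EuclideanSpace ℝ (Fin n)) :
    hessian (fun y => c * ∑ i ∈ s, f i y) x = c • ∑ i ∈ s, hessian (f i) x := by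
  funext a b
  have hsum : ContDiff ℝ 2 (fun y => ∑ i ∈ s, f i y) := ContDiff.sum fun i _ => hf i
  have h1 : iteratedFDeriv ℝ 2 (fun y => c * ∑ i ∈ s, f i y) x
        ![EuclideanSpace.single a 1, EuclideanSpace.single b 1]
      = c • iteratedFDeriv ℝ 2 (fun y => ∑ i ∈ s, f i y) x
        ![EuclideanSpace.single a 1, EuclideanSpace.single b 1] := by
    have := iteratedFDeriv_const_smul_apply' (i := 2) (x := x) (a := c) hsum.contDiffAt
    simp only [smul_eq_mul] at this
    rw [this, ContinuousMultilinearMap.smul_apply]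
  show iteratedFDeriv ℝ 2 (fun y => c * ∑ i ∈ s, f i y) x _ = _
  rw [h1, iteratedFDeriv_sum (fun i _ => hf i)]
  simp [hessian, Matrix.smul_apply, Matrix.sum_apply]

lemma hessian_isHermitian {n : ℕ} {f : EuclideanSpace ℝ (Fin n) → ℝ} (hf : ContDiff ℝ 2 f)
    (x : EuclideanSpace ℝ (Fin n)) : (hessian f x).IsHermitian := by
  have hs : ∀ v w, fderiv ℝ (fderiv ℝ f) x v w = fderiv ℝ (fderiv ℝ f) x w v :=
    (hf.contDiffAt).isSymmSndFDerivAt (by simp)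
  ext i j
  simp only [Matrix.conjTranspose_apply, hessian, iteratedFDeriv_two_apply, star_trivial]
  simpa using hs (EuclideanSpace.single j 1) (EuclideanSpace.single i 1)

lemma isHermitian_combo {ι n : ℕ} (c : ℝ) (s : Finset (Fin ι)) (M : Fin ι → Matrix (Fin n) (Fin n) ℝ)
    (h : ∀ i, (M i).IsHermitian) : (c • ∑ i ∈ s, M i).IsHermitian := by
  unfold Matrix.IsHermitian
  rw [Matrix.conjTranspose_smul, Matrix.conjTranspose_sum]
  simp only [star_trivial]
  congr 1
  exact Finset.sum_congr rfl fun i _ => h i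

lemma avg_diff_bound {d : ℕ} [NeZero d] {V : Type*} [NormedAddCommGroup V] [NormedSpace ℝ V]
    (g : Fin d → V) (B : ℝ) (hg : ∀ i, ‖g i‖ ≤ B)
    (G : Finset (Fin d)) (hG : G.Nonempty) :
    ‖(G.card : ℝ)⁻¹ • ∑ i ∈ G, g i - (d : ℝ)⁻¹ • ∑ i, g i‖
      ≤ 2 * (((d : ℝ) - G.card) / d) * B := by
  have hd : (0:ℝ) < d := by
    have := Nat.pos_of_ne_zero (NeZero.ne d); exact_mod_cast this
  have hm : (0:ℝ) < G.card := by exact_mod_cast Finset.card_pos.mpr hG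
  have hmd : (G.card : ℝ) ≤ d := by
    have := Finset.card_le_univ G
    simpa using (Nat.cast_le.mpr this : (G.card : ℝ) ≤ (Finset.univ : Finset (Fin d)).card)
  have hsplit : ∑ i, g i = ∑ i ∈ G, g i + ∑ i ∈ Gᶜ, g i := (Finset.sum_add_sum_compl G g).symm
  have hcardc : ((Gᶜ : Finset (Fin d)).card : ℝ) = (d : ℝ) - G.card := by
    rw [Finset.card_compl]
    have h1 : G.card ≤ Fintype.card (Fin d) := Finset.card_le_univ G
    rw [Nat.cast_sub h1]
    simp
  have heq : (G.card : ℝ)⁻¹ • ∑ i ∈ G, g i - (d : ℝ)⁻¹ • ∑ i, g i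
      = ((G.card : ℝ)⁻¹ - (d : ℝ)⁻¹) • ∑ i ∈ G, g i + (-(d : ℝ)⁻¹) • ∑ i ∈ Gᶜ, g i := by
    rw [hsplit]; module
  have hb1 : ‖∑ i ∈ G, g i‖ ≤ (G.card : ℝ) * B := by
    calc ‖∑ i ∈ G, g i‖ ≤ ∑ i ∈ G, ‖g i‖ := norm_sum_le _ _
      _ ≤ ∑ _i ∈ G, B := Finset.sum_le_sum fun i _ => hg i
      _ = (G.card : ℝ) * B := by rw [Finset.sum_const, nsmul_eq_mul]
  have hb2 : ‖∑ i ∈ Gᶜ, g i‖ ≤ ((d:ℝ) - G.card) * B := by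
    calc ‖∑ i ∈ Gᶜ, g i‖ ≤ ∑ i ∈ Gᶜ, ‖g i‖ := norm_sum_le _ _
      _ ≤ ∑ _i ∈ Gᶜ, B := Finset.sum_le_sum fun i _ => hg i
      _ = ((d:ℝ) - G.card) * B := by rw [Finset.sum_const, nsmul_eq_mul, hcardc]
  have hcoef : (0:ℝ) ≤ (G.card : ℝ)⁻¹ - (d : ℝ)⁻¹ := by
    have := inv_anti₀ hm hmd
    linarith
  calc ‖(G.card : ℝ)⁻¹ • ∑ i ∈ G, g i - (d : ℝ)⁻¹ • ∑ i, g i‖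
      ≤ ‖((G.card : ℝ)⁻¹ - (d : ℝ)⁻¹) • ∑ i ∈ G, g i‖ + ‖(-(d : ℝ)⁻¹) • ∑ i ∈ Gᶜ, g i‖ := by
        rw [heq]; exact norm_add_le _ _
    _ = ((G.card : ℝ)⁻¹ - (d : ℝ)⁻¹) * ‖∑ i ∈ G, g i‖ + (d : ℝ)⁻¹ * ‖∑ i ∈ Gᶜ, g i‖ := by
        rw [norm_smul, norm_smul, Real.norm_eq_abs, Real.norm_eq_abs, abs_of_nonneg hcoef,
          abs_neg, abs_of_nonneg (by positivity : (0:ℝ) ≤ (d:ℝ)⁻¹)]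
    _ ≤ ((G.card : ℝ)⁻¹ - (d : ℝ)⁻¹) * ((G.card : ℝ) * B) + (d : ℝ)⁻¹ * (((d:ℝ) - G.card) * B) := by
        gcongr
    _ = 2 * (((d : ℝ) - G.card) / d) * B := by field_simp; ring

set_option maxHeartbeats 1000000 in
theorem stmt_12 {n d : ℕ} (hn : 1 ≤ n) [NeZero d]
    (f : Fin d → EuclideanSpace ℝ (Fin n) → ℝ)
    (hf : ∀ i, ContDiff ℝ 2 (f i))
    (Lg : ℝ) (hLg : 0 < Lg)
    (hlip : ∀ i, ∀ y z : EuclideanSpace ℝ (Fin n),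
      ‖gradient (f i) y - gradient (f i) z‖ ≤ Lg * ‖y - z‖)
    (xstar : Fin d → EuclideanSpace ℝ (Fin n))
    (hstar : ∀ i, gradient (f i) (xstar i) = 0)
    (x : EuclideanSpace ℝ (Fin n)) (D0 : ℝ) (hD0 : 0 ≤ D0)
    (hDx : ∀ i, ‖x - xstar i‖ ≤ D0)
    (hhess : ∀ i, specNorm (hessian (f i) x) ≤ Lg)
    (εg εH γ Δ Δmax : ℝ) (hεg : 0 < εg) (hεH : 0 < εH) (hγ : 1 < γ)
    (hΔ : 0 < Δ) (hΔmax : Δ ≤ Δmax)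
    (j : ℕ) (hjg : 10 * Lg * D0 < εg * γ ^ j) (hjH : 10 * Lg < εH * γ ^ j) :
    (εg < ‖gradient (fun y => (d : ℝ)⁻¹ * ∑ i, f i y) x‖ →
      ∀ G : Finset (Fin d), G.Nonempty →
        ⌈(1 - (γ ^ j)⁻¹ * (Δ / Δmax) ^ 2) * (d : ℝ)⌉₊ ≤ G.card →
        4 * εg / 5 < ‖gradient (fun y => ((G.card : ℝ))⁻¹ * ∑ i ∈ G, f i y) x‖) ∧
    (εH < -lambdaMin (hessian (fun y => (d : ℝ)⁻¹ * ∑ i, f i y) x) →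
      ∀ H : Finset (Fin d), H.Nonempty →
        ⌈(1 - Δ / (γ ^ j * Δmax)) * (d : ℝ)⌉₊ ≤ H.card →
        4 * εH / 5 < -lambdaMin (hessian (fun y => ((H.card : ℝ))⁻¹ * ∑ i ∈ H, f i y) x)) := by
  haveI : NeZero n := ⟨by omega⟩
  have hγ0 : (0:ℝ) < γ ^ j := pow_pos (lt_trans zero_lt_one hγ) j
  have hγinv : (0:ℝ) < (γ ^ j)⁻¹ := inv_pos.mpr hγ0
  have hγcancel : (γ ^ j)⁻¹ * γ ^ j = 1 := inv_mul_cancel₀ (ne_of_gt hγ0)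
  have hΔm0 : (0:ℝ) < Δmax := lt_of_lt_of_le hΔ hΔmax
  have hrat1 : Δ / Δmax ≤ 1 := div_le_one_of_le₀ hΔmax hΔm0.le
  have hrat0 : 0 < Δ / Δmax := div_pos hΔ hΔm0
  have hd0 : (0:ℝ) < d := by
    have := Nat.pos_of_ne_zero (NeZero.ne d); exact_mod_cast this
  constructor
  · -- gradient part
    intro hbig G hGne hGcard
    have hB : ∀ i, ‖gradient (f i) x‖ ≤ Lg * D0 := fun i => by
      have h := hlip i x (xstar i)
      rw [hstar i, sub_zero] at h
      exact h.trans (mul_le_mul_of_nonneg_left (hDx i) hLg.le)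
    rw [gradient_combo f hf _ Finset.univ x] at hbig
    rw [gradient_combo f hf _ G x]
    have hdiff := avg_diff_bound (fun i => gradient (f i) x) (Lg * D0) hB G hGne
    have hcard : (1 - (γ ^ j)⁻¹ * (Δ / Δmax) ^ 2) * (d:ℝ) ≤ (G.card : ℝ) := by
      calc (1 - (γ ^ j)⁻¹ * (Δ / Δmax) ^ 2) * (d:ℝ)
          ≤ (⌈(1 - (γ ^ j)⁻¹ * (Δ / Δmax) ^ 2) * (d:ℝ)⌉₊ : ℝ) := Nat.le_ceil _
        _ ≤ G.card := by exact_mod_cast hGcard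
    have h2 : ((d:ℝ) - G.card)/d ≤ (γ ^ j)⁻¹ * (Δ / Δmax) ^ 2 := by
      rw [div_le_iff₀ hd0]; nlinarith
    have h3 : (γ ^ j)⁻¹ * (Δ / Δmax) ^ 2 ≤ (γ ^ j)⁻¹ := by
      nlinarith
    have hLD : (0:ℝ) ≤ Lg * D0 := mul_nonneg hLg.le hD0
    have step1 : 2 * (((d:ℝ) - G.card)/d) * (Lg * D0) ≤ 2 * (γ ^ j)⁻¹ * (Lg * D0) := by
      have : ((d:ℝ) - G.card)/d ≤ (γ ^ j)⁻¹ := le_trans h2 h3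
      nlinarith
    have step2 : 2 * (γ ^ j)⁻¹ * (Lg * D0) < εg / 5 := by
      have := mul_lt_mul_of_pos_right hjg hγinv
      nlinarith
    have hn1 := norm_sub_norm_le ((d:ℝ)⁻¹ • ∑ i, gradient (f i) x)
      ((G.card:ℝ)⁻¹ • ∑ i ∈ G, gradient (f i) x)
    rw [norm_sub_rev] at hn1
    linarith
  · -- Hessian part
    intro hbig H hHne hHcard
    have hherm : ∀ i, (hessian (f i) x).IsHermitian := fun i => hessian_isHermitian (hf i) x
    rw [hessian_combo f hf _ Finset.univ x] at hbig
    rw [hessian_combo f hf _ H x]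
    have hAvgHerm := isHermitian_combo (d:ℝ)⁻¹ Finset.univ (fun i => hessian (f i) x) hherm
    have hHHerm := isHermitian_combo (H.card:ℝ)⁻¹ H (fun i => hessian (f i) x) hherm
    have hpert := lambdaMin_perturb hAvgHerm hHHerm
    have hspec : specNorm ((H.card:ℝ)⁻¹ • ∑ i ∈ H, hessian (f i) x
          - (d:ℝ)⁻¹ • ∑ i, hessian (f i) x)
        = ‖(H.card:ℝ)⁻¹ • ∑ i ∈ H, (Matrix.toEuclideanCLM (𝕜:=ℝ) (hessian (f i) x))
          - (d:ℝ)⁻¹ • ∑ i, Matrix.toEuclideanCLM (𝕜:=ℝ) (hessian (f i) x)‖ := by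
      unfold specNorm
      congr 1
      rw [map_sub, map_smul, map_smul, map_sum, map_sum]
    have hbound := avg_diff_bound (fun i => Matrix.toEuclideanCLM (𝕜:=ℝ) (hessian (f i) x))
      Lg (fun i => hhess i) H hHne
    rw [← hspec] at hbound
    have hcard : (1 - Δ / (γ ^ j * Δmax)) * (d:ℝ) ≤ (H.card : ℝ) := by
      calc (1 - Δ / (γ ^ j * Δmax)) * (d:ℝ)
          ≤ (⌈(1 - Δ / (γ ^ j * Δmax)) * (d:ℝ)⌉₊ : ℝ) := Nat.le_ceil _
        _ ≤ H.card := by exact_mod_cast hHcard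
    have hHeq : Δ / (γ ^ j * Δmax) = (γ ^ j)⁻¹ * (Δ / Δmax) := by
      field_simp
    have h2 : ((d:ℝ) - H.card)/d ≤ Δ / (γ ^ j * Δmax) := by
      rw [div_le_iff₀ hd0]; nlinarith
    have h3 : Δ / (γ ^ j * Δmax) ≤ (γ ^ j)⁻¹ := by
      rw [hHeq]; nlinarith
    have step1 : 2 * (((d:ℝ) - H.card)/d) * Lg ≤ 2 * (γ ^ j)⁻¹ * Lg := by
      have : ((d:ℝ) - H.card)/d ≤ (γ ^ j)⁻¹ := le_trans h2 h3
      nlinarith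
    have step2 : 2 * (γ ^ j)⁻¹ * Lg < εH / 5 := by
      have := mul_lt_mul_of_pos_right hjH hγinv
      nlinarith
    linarith
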